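/- Let V = ℝⁿ with weighted inner product ⟨u,v⟩ = ∑ᵢ wᵢ uᵢ vᵢ (wᵢ > 0), let e = ∑ᵢ (1/wᵢ) eᵢ, and let f¹,…,fᵏ be an orthonormal basis of the orthogonal complement of e (so k = n−1). Then for any two indices g, h among 1,…,k and vectors fᵍ = (λᵢ(g))ᵢ, fʰ = (λᵢ(h))ᵢ: ∑_{j=1}^{k} (∑ᵢ wᵢ² λᵢ(j) λᵢ(g) λᵢ(h))² = ∑ᵢ wᵢ³ λᵢ(g)² λᵢ(h)² − (12/(∑ᵢ 1/wᵢ))·0 − (1/∑ᵢ 1/wᵢ)·δ_{g,h}², i.e., ∑_{j=1}^{k} (∑ᵢ wᵢ² λᵢ(j) λᵢ(g) λᵢ(h))² = ∑ᵢ wᵢ³ λᵢ(g)² λᵢ(h)² − δ_{g,h}/(∑ᵢ 1/wᵢ). -/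

import Mathlib

open Finset Matrix

/-- Column orthogonality: if the rows (scaled by `√wᵢ`) together with the normalized
vector `e` form an orthonormal set of `n` vectors in `ℝⁿ`, then the columns are
orthonormal too. -/
theorem aux_col_orth {m : ℕ} (w : Fin (m + 1) → ℝ) (hw : ∀ i, 0 < w i)
    (l : Fin m → Fin (m + 1) → ℝ)
    (horth : ∀ j j', ∑ i, w i * l j i * l j' i = if j = j' then 1 else 0)
    (hperp : ∀ j, ∑ i, l j i = 0) (i i' : Fin (m + 1)) :
    ∑ j, l j i * l j i' =
      (if i = i' then (w i)⁻¹ else 0) - (w i * w i' * ∑ k, (w k)⁻¹)⁻¹ := by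
  set S := ∑ k, (w k)⁻¹ with hSdef
  have hS : 0 < S := Finset.sum_pos (fun k _ => inv_pos.mpr (hw k)) Finset.univ_nonempty
  set A : Matrix (Fin (m + 1)) (Fin (m + 1)) ℝ :=
    Matrix.of fun r i => Fin.lastCases (Real.sqrt (w i) * (w i)⁻¹ / Real.sqrt S)
      (fun j => Real.sqrt (w i) * l j i) r with hA
  have hAc : ∀ (j : Fin m) (i : Fin (m + 1)),
      A (Fin.castSucc j) i = Real.sqrt (w i) * l j i := by
    intro j i; simp [hA, Fin.lastCases_castSucc]
  have hAl : ∀ (i : Fin (m + 1)),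
      A (Fin.last m) i = Real.sqrt (w i) * (w i)⁻¹ / Real.sqrt S := by
    intro i; simp [hA, Fin.lastCases_last]
  have hsq : ∀ i, Real.sqrt (w i) * Real.sqrt (w i) = w i :=
    fun i => Real.mul_self_sqrt (hw i).le
  have hsqS : Real.sqrt S * Real.sqrt S = S := Real.mul_self_sqrt hS.le
  have hAAT : A * Aᵀ = 1 := by
    ext r r'
    rw [Matrix.mul_apply]
    simp only [Matrix.transpose_apply]
    induction r using Fin.lastCases with
    | last =>
      induction r' using Fin.lastCases with
      | last =>
        simp only [hAl, Matrix.one_apply_eq]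
        have : ∀ i : Fin (m+1), (Real.sqrt (w i) * (w i)⁻¹ / Real.sqrt S) *
            (Real.sqrt (w i) * (w i)⁻¹ / Real.sqrt S) = (w i)⁻¹ * S⁻¹ := by
          intro i
          rw [div_mul_div_comm, hsqS]
          rw [show Real.sqrt (w i) * (w i)⁻¹ * (Real.sqrt (w i) * (w i)⁻¹)
            = (Real.sqrt (w i) * Real.sqrt (w i)) * ((w i)⁻¹ * (w i)⁻¹) by ring, hsq]
          rw [show w i * ((w i)⁻¹ * (w i)⁻¹) = (w i * (w i)⁻¹) * (w i)⁻¹ by ring,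
            mul_inv_cancel₀ (hw i).ne', one_mul, div_eq_mul_inv]
        rw [Finset.sum_congr rfl fun i _ => this i, ← Finset.sum_mul, ← hSdef,
          mul_inv_cancel₀ hS.ne']
      | cast j' =>
        have hne : Fin.last m ≠ Fin.castSucc j' := (Fin.castSucc_lt_last j').ne'
        rw [Matrix.one_apply_ne hne]
        have : ∀ i : Fin (m+1), A (Fin.last m) i * A (Fin.castSucc j') i
            = (Real.sqrt S)⁻¹ * l j' i := by
          intro i
          rw [hAl, hAc]
          rw [show Real.sqrt (w i) * (w i)⁻¹ / Real.sqrt S * (Real.sqrt (w i) * l j' i)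
            = (Real.sqrt (w i) * Real.sqrt (w i)) * (w i)⁻¹ * (Real.sqrt S)⁻¹ * l j' i by
              rw [div_eq_mul_inv]; ring, hsq, mul_inv_cancel₀ (hw i).ne', one_mul]
        rw [Finset.sum_congr rfl fun i _ => this i, ← Finset.mul_sum, hperp, mul_zero]
    | cast j =>
      induction r' using Fin.lastCases with
      | last =>
        have hne : Fin.castSucc j ≠ Fin.last m := (Fin.castSucc_lt_last j).ne
        rw [Matrix.one_apply_ne hne]
        have : ∀ i : Fin (m+1), A (Fin.castSucc j) i * A (Fin.last m) i
            = (Real.sqrt S)⁻¹ * l j i := by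
          intro i
          rw [hAl, hAc]
          rw [show Real.sqrt (w i) * l j i * (Real.sqrt (w i) * (w i)⁻¹ / Real.sqrt S)
            = (Real.sqrt (w i) * Real.sqrt (w i)) * (w i)⁻¹ * (Real.sqrt S)⁻¹ * l j i by
              rw [div_eq_mul_inv]; ring, hsq, mul_inv_cancel₀ (hw i).ne', one_mul]
        rw [Finset.sum_congr rfl fun i _ => this i, ← Finset.mul_sum, hperp, mul_zero]
      | cast j' =>
        have : ∀ i : Fin (m+1), A (Fin.castSucc j) i * A (Fin.castSucc j') i
            = w i * l j i * l j' i := by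
          intro i
          rw [hAc, hAc,
            show Real.sqrt (w i) * l j i * (Real.sqrt (w i) * l j' i)
              = (Real.sqrt (w i) * Real.sqrt (w i)) * l j i * l j' i by ring, hsq]
        rw [Finset.sum_congr rfl fun i _ => this i, horth, Matrix.one_apply]
        simp [Fin.castSucc_inj]
  have hATA : Aᵀ * A = 1 := mul_eq_one_comm.mp hAAT
  have h2 : (Aᵀ * A) i i' = (1 : Matrix (Fin (m+1)) (Fin (m+1)) ℝ) i i' := by rw [hATA]
  rw [Matrix.mul_apply] at h2
  simp only [Matrix.transpose_apply, Matrix.one_apply] at h2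
  rw [Fin.sum_univ_castSucc] at h2
  have hterm : ∀ j : Fin m, A (Fin.castSucc j) i * A (Fin.castSucc j) i'
      = (Real.sqrt (w i) * Real.sqrt (w i')) * (l j i * l j i') := by
    intro j; rw [hAc, hAc]; ring
  rw [Finset.sum_congr rfl fun j _ => hterm j, ← Finset.mul_sum, hAl, hAl] at h2
  have hX : Real.sqrt (w i) * (w i)⁻¹ / Real.sqrt S * (Real.sqrt (w i') * (w i')⁻¹ / Real.sqrt S)
      = (Real.sqrt (w i) * Real.sqrt (w i')) * ((w i) * (w i') * S)⁻¹ := by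
    rw [div_mul_div_comm, hsqS, mul_inv, mul_inv, div_eq_mul_inv]; ring
  rw [hX] at h2
  have hc : (0 : ℝ) < Real.sqrt (w i) * Real.sqrt (w i') := by
    have := hw i; have := hw i'; positivity
  rcases eq_or_ne i i' with rfl | hii
  · simp only [if_pos rfl, if_true, eq_self_iff_true] at h2 ⊢
    rw [hsq] at h2
    apply mul_left_cancel₀ (hw i).ne'
    rw [mul_sub, mul_inv_cancel₀ (hw i).ne']
    linarith [h2]
  · simp only [if_neg hii] at h2 ⊢
    apply mul_left_cancel₀ hc.ne'
    rw [mul_sub, mul_zero]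
    linarith [h2]

/-- Parseval identity for the triple products: if `f¹,…,fⁿ⁻¹` is an orthonormal basis of
the orthogonal complement of `e = (1/wᵢ)ᵢ` in `ℝⁿ` with the weighted inner product, then
`∑ⱼ (∑ᵢ wᵢ² λᵢ(j) λᵢ(g) λᵢ(h))² = ∑ᵢ wᵢ³ λᵢ(g)² λᵢ(h)² - δ_{g,h}/(∑ᵢ 1/wᵢ)`. -/
theorem triple_product_parseval {n : ℕ} (hn : 1 ≤ n) (w : Fin n → ℝ)
    (hw : ∀ i, 0 < w i) (l : Fin (n - 1) → Fin n → ℝ)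
    (horth : ∀ j j', ∑ i, w i * l j i * l j' i = if j = j' then 1 else 0)
    (hperp : ∀ j, ∑ i, l j i = 0)
    (g h : Fin (n - 1)) :
    ∑ j, (∑ i, w i ^ 2 * l j i * l g i * l h i) ^ 2 =
      ∑ i, w i ^ 3 * l g i ^ 2 * l h i ^ 2
        - (if g = h then 1 else 0) / (∑ i, (w i)⁻¹) := by
  obtain ⟨m, rfl⟩ : ∃ m, n = m + 1 := ⟨n - 1, (Nat.succ_pred_eq_of_pos hn).symm⟩
  set S := ∑ i, (w i)⁻¹ with hSdef
  have hS : 0 < S := Finset.sum_pos (fun k _ => inv_pos.mpr (hw k)) Finset.univ_nonempty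
  have key : ∀ i i', ∑ j, l j i * l j i' =
      (if i = i' then (w i)⁻¹ else 0) - (w i * w i' * S)⁻¹ :=
    aux_col_orth w hw l horth hperp
  have hgh : ∑ i, w i * l g i * l h i = if g = h then 1 else 0 := horth g h
  calc ∑ j, (∑ i, w i ^ 2 * l j i * l g i * l h i) ^ 2
      = ∑ j, ∑ i, ∑ i', (w i ^ 2 * l g i * l h i) * (w i' ^ 2 * l g i' * l h i')
          * (l j i * l j i') := by
        refine Finset.sum_congr rfl fun j _ => ?_
        rw [sq, Finset.sum_mul_sum]
        exact Finset.sum_congr rfl fun i _ => Finset.sum_congr rfl fun i' _ => by ring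
    _ = ∑ i, ∑ i', (w i ^ 2 * l g i * l h i) * (w i' ^ 2 * l g i' * l h i')
          * ∑ j, (l j i * l j i') := by
        rw [Finset.sum_comm]
        refine Finset.sum_congr rfl fun i _ => ?_
        rw [Finset.sum_comm]
        exact Finset.sum_congr rfl fun i' _ => (Finset.mul_sum _ _ _).symm
    _ = ∑ i, ∑ i', (w i ^ 2 * l g i * l h i) * (w i' ^ 2 * l g i' * l h i')
          * ((if i = i' then (w i)⁻¹ else 0) - (w i * w i' * S)⁻¹) := by
        simp_rw [key]
    _ = (∑ i, w i ^ 3 * l g i ^ 2 * l h i ^ 2)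
          - (∑ i, w i * l g i * l h i) ^ 2 / S := by
        simp_rw [mul_sub, Finset.sum_sub_distrib]
        congr 1
        · refine Finset.sum_congr rfl fun i _ => ?_
          simp_rw [mul_ite, mul_zero, Finset.sum_ite_eq, Finset.mem_univ, if_pos]
          have hne := (hw i).ne'
          field_simp
        · rw [sq, Finset.sum_mul_sum, Finset.sum_div]
          refine Finset.sum_congr rfl fun i _ => ?_
          rw [Finset.sum_div]
          refine Finset.sum_congr rfl fun i' _ => ?_
          have := (hw i).ne'; have := (hw i').ne'
          field_simp
    _ = ∑ i, w i ^ 3 * l g i ^ 2 * l h i ^ 2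
          - (if g = h then 1 else 0) / S := by
        rw [hgh]
        rcases eq_or_ne g h with rfl | hgh'
        · simp
        · simp [hgh']
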